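/- Let f ∈ L²(0,1) and set F(t) = ∫₀ᵗ f(s)² ds. Consider the integral operators on L²(0,1) with the kernels Q₁(x,y) = F(min(x,y)) − ∫₀¹ F(min(x,u)) du − ∫₀¹ F(min(v,y)) dv + ∫₀¹∫₀¹ F(min(u,v)) du dv (the covariance of the centered stochastic integral ℱ_W(x) = ∫₀ˣ f dW minus its average) and Q₂(x,y) = f(x) f(y) (min(x,y) − xy) (the covariance of f(x)B(x), B the Brownian bridge). Then these two integral operators have the same nonzero eigenvalues with multiplicities. -/

import Mathlib

open MeasureTheory

noncomputable section

/-- Lebesgue measure on `[0,1]`, as a measure on `ℝ`. -/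
def unitMeasure : Measure ℝ := volume.restrict (Set.Icc (0:ℝ) 1)

/-- `A` and `B` have the same nonzero eigenvalues with multiplicities. -/
def SameNonzeroEigenvalues {H : Type*} [NormedAddCommGroup H] [NormedSpace ℂ H]
    (A B : H →L[ℂ] H) : Prop :=
  ∀ l : ℂ, l ≠ 0 → ∀ m : ℕ, 1 ≤ m →
    Module.rank ℂ (LinearMap.ker (((A - l • 1) ^ m : H →L[ℂ] H) : H →ₗ[ℂ] H)) =
    Module.rank ℂ (LinearMap.ker (((B - l • 1) ^ m : H →L[ℂ] H) : H →ₗ[ℂ] H))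

namespace Stmt7Aux

open Set Filter

/-! ### Abstract part: `RS` and `SR` have the same generalized eigenspace dimensions -/

section Abstract

variable {H : Type*} [NormedAddCommGroup H] [NormedSpace ℂ H]

lemma pow_apply_eq_smul (A : H →L[ℂ] H) (l : ℂ) (u : H) (hu : A u = 0) (m : ℕ) :
    ((A - l • 1) ^ m) u = ((-l) ^ m) • u := by
  induction m with
  | zero => simp
  | succ n ih =>
      rw [pow_succ, ContinuousLinearMap.mul_apply]
      have h1 : (A - l • 1) u = (-l) • u := by
        simp [ContinuousLinearMap.sub_apply, hu, neg_smul]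
      rw [h1, ((A - l • 1) ^ n).map_smul, ih, smul_smul, pow_succ, mul_comm]

lemma intertwine_pow (A B : H →L[ℂ] H) (S : H →ₗ[ℂ] H)
    (h : ∀ u, S (A u) = B (S u)) (l : ℂ) (m : ℕ) (u : H) :
    S (((A - l • 1) ^ m) u) = ((B - l • 1) ^ m) (S u) := by
  induction m generalizing u with
  | zero => simp
  | succ n ih =>
      rw [pow_succ, ContinuousLinearMap.mul_apply, ih, pow_succ,
        ContinuousLinearMap.mul_apply]
      congr 1
      simp only [ContinuousLinearMap.sub_apply, ContinuousLinearMap.smul_apply,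
        ContinuousLinearMap.one_apply, map_sub, LinearMap.map_smul, h]

lemma rank_ker_le (A B : H →L[ℂ] H) (S R : H →ₗ[ℂ] H)
    (hA : ∀ u, A u = R (S u)) (hB : ∀ u, B u = S (R u))
    (l : ℂ) (hl : l ≠ 0) (m : ℕ) :
    Module.rank ℂ (LinearMap.ker (((A - l • 1) ^ m : H →L[ℂ] H) : H →ₗ[ℂ] H)) ≤
      Module.rank ℂ (LinearMap.ker (((B - l • 1) ^ m : H →L[ℂ] H) : H →ₗ[ℂ] H)) := by
  have hSA : ∀ u, S (A u) = B (S u) := fun u => by rw [hA, hB]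
  have hmap : ∀ u ∈ LinearMap.ker (((A - l • 1) ^ m : H →L[ℂ] H) : H →ₗ[ℂ] H),
      S u ∈ LinearMap.ker (((B - l • 1) ^ m : H →L[ℂ] H) : H →ₗ[ℂ] H) := by
    intro u hu
    rw [LinearMap.mem_ker, ContinuousLinearMap.coe_coe] at hu ⊢
    rw [← intertwine_pow A B S hSA l m u, hu, map_zero]
  refine LinearMap.rank_le_of_injective (S.restrict hmap) ?_
  intro u v huv
  have h1 : S (u.1 - v.1) = 0 := by
    have : S u.1 = S v.1 := congrArg Subtype.val huv
    rw [map_sub, this, sub_self]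
  have h2 : ((A - l • 1) ^ m) (u.1 - v.1) = 0 := by
    have hu := u.2; have hv := v.2
    rw [LinearMap.mem_ker, ContinuousLinearMap.coe_coe] at hu hv
    rw [map_sub, hu, hv, sub_self]
  have h3 : A (u.1 - v.1) = 0 := by rw [hA, h1, map_zero]
  have h4 := pow_apply_eq_smul A l (u.1 - v.1) h3 m
  rw [h2] at h4
  have h5 : u.1 - v.1 = 0 := by
    have hne : (-l) ^ m ≠ 0 := pow_ne_zero _ (neg_ne_zero.mpr hl)
    rcases smul_eq_zero.mp h4.symm with h | h
    · exact absurd h hne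
    · exact h
  exact Subtype.ext (sub_eq_zero.mp h5)

end Abstract

/-! ### Measure facts -/

instance : IsProbabilityMeasure unitMeasure := by
  constructor
  rw [unitMeasure, Measure.restrict_apply_univ, Real.volume_Icc]
  norm_num

lemma ae_mem_unit : ∀ᵐ x ∂unitMeasure, x ∈ Icc (0:ℝ) 1 := by
  rw [unitMeasure]
  exact ae_restrict_mem measurableSet_Icc

/-- The square-root kernel building block. -/
def gk (x s : ℝ) : ℝ := (if s ≤ x then 1 else 0) - (1 - s)

lemma gk_meas : Measurable (fun p : ℝ × ℝ => gk p.1 p.2) := by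
  unfold gk
  apply Measurable.sub
  · exact Measurable.ite (measurableSet_le measurable_snd measurable_fst)
      measurable_const measurable_const
  · fun_prop

lemma gk_meas_swap : Measurable (fun p : ℝ × ℝ => gk p.2 p.1) :=
  gk_meas.comp measurable_swap

lemma gk_meas_left (x : ℝ) : Measurable fun s => gk x s :=
  gk_meas.comp (measurable_const.prodMk measurable_id)

lemma gk_meas_right (x : ℝ) : Measurable fun s => gk s x :=
  gk_meas.comp (measurable_id.prodMk measurable_const)

lemma gk_abs_le {x s : ℝ} (hs : s ∈ Icc (0:ℝ) 1) : |gk x s| ≤ 1 := by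
  unfold gk
  obtain ⟨h0, h1⟩ := hs
  split_ifs with h
  · rw [abs_le]; constructor <;> linarith
  · rw [abs_le]; constructor <;> linarith

lemma gk_abs_le' {x s : ℝ} (hx : x ∈ Icc (0:ℝ) 1) : |gk s x| ≤ 2 := by
  unfold gk
  obtain ⟨h0, h1⟩ := hx
  split_ifs with h
  · rw [abs_le]; constructor <;> linarith
  · rw [abs_le]; constructor <;> linarith

/-- The basic indicator integral: `∫ (if a ≤ v then 1 else 0) dμ = 1 - a` for `a ∈ [0,1]`. -/
lemma integral_ite_ge {a : ℝ} (ha : a ∈ Icc (0:ℝ) 1) :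
    ∫ v, (if a ≤ v then (1:ℝ) else 0) ∂unitMeasure = 1 - a := by
  have h1 : (fun v => if a ≤ v then (1:ℝ) else 0) = (Ici a).indicator (fun _ => (1:ℝ)) := by
    ext v; simp [Set.indicator_apply, Set.mem_Ici]
  rw [h1, integral_indicator_const _ measurableSet_Ici, smul_eq_mul, mul_one,
    unitMeasure, measureReal_def, Measure.restrict_apply measurableSet_Ici]
  have h2 : Ici a ∩ Icc (0:ℝ) 1 = Icc a 1 := by
    ext z
    simp only [Set.mem_inter_iff, Set.mem_Ici, Set.mem_Icc]
    constructor
    · rintro ⟨h, _, h'⟩; exact ⟨h, h'⟩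
    · rintro ⟨h, h'⟩; exact ⟨h, le_trans ha.1 h, h'⟩
  rw [h2, Real.volume_Icc, ENNReal.toReal_ofReal (by linarith [ha.2])]

section WithF

variable {f : ℝ → ℝ}

/-! ### Kernel identities -/

lemma indicator_int (m : ℝ) (hm : m ∈ Icc (0:ℝ) 1) :
    ∫ s, f s ^ 2 * (if s ≤ m then (1:ℝ) else 0) ∂unitMeasure
      = ∫ s in Icc (0:ℝ) m, f s ^ 2 := by
  have h1 : (fun s => f s ^ 2 * (if s ≤ m then (1:ℝ) else 0))
      = (Iic m).indicator (fun s => f s ^ 2) := by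
    ext s; simp only [Set.indicator_apply, Set.mem_Iic, mul_ite, mul_one, mul_zero]
  rw [h1, integral_indicator measurableSet_Iic]
  show ∫ s, f s ^ 2 ∂((volume.restrict (Icc (0:ℝ) 1)).restrict (Iic m)) = _
  rw [Measure.restrict_restrict measurableSet_Iic]
  have h2 : Iic m ∩ Icc (0:ℝ) 1 = Icc 0 m := by
    ext z
    simp only [Set.mem_inter_iff, Set.mem_Iic, Set.mem_Icc]
    constructor
    · rintro ⟨h, h', _⟩; exact ⟨h', h⟩
    · rintro ⟨h, h'⟩; exact ⟨h', h, le_trans h' hm.2⟩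
  rw [h2]

lemma integral_complex_ofReal {μ : Measure ℝ} {g : ℝ → ℝ} :
    ∫ x, ((g x : ℝ) : ℂ) ∂μ = ((∫ x, g x ∂μ : ℝ) : ℂ) := integral_ofReal

lemma integrable_bdd {h : ℝ → ℝ} (hm : Measurable h) {c : ℝ}
    (hb : ∀ᵐ s ∂unitMeasure, ‖h s‖ ≤ c) : Integrable h unitMeasure :=
  Integrable.mono' (integrable_const c) hm.aestronglyMeasurable hb

lemma integrable_sq_mul (hf : MemLp f 2 unitMeasure) {h : ℝ → ℝ} (hm : Measurable h) {c : ℝ}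
    (hb : ∀ᵐ s ∂unitMeasure, ‖h s‖ ≤ c) :
    Integrable (fun s => f s ^ 2 * h s) unitMeasure := by
  have h1 : Integrable (fun s => h s * f s ^ 2) unitMeasure :=
    Integrable.bdd_mul hf.integrable_sq hm.aestronglyMeasurable hb
  exact h1.congr (Eventually.of_forall fun s => mul_comm _ _)

lemma meas_ite_le_const (a : ℝ) : Measurable fun s : ℝ => if s ≤ a then (1:ℝ) else 0 :=
  Measurable.ite (measurableSet_le measurable_id measurable_const)
    measurable_const measurable_const

lemma meas_ite_const_le (a : ℝ) : Measurable fun s : ℝ => if a ≤ s then (1:ℝ) else 0 :=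
  Measurable.ite (measurableSet_le measurable_const measurable_id)
    measurable_const measurable_const

lemma abs_ite_le (P : Prop) [Decidable P] : ‖(if P then (1:ℝ) else 0)‖ ≤ 1 := by
  split_ifs <;> simp

lemma abs_one_sub_le {s : ℝ} (hs : s ∈ Icc (0:ℝ) 1) : ‖1 - s‖ ≤ 1 := by
  rw [Real.norm_eq_abs, abs_le]
  constructor <;> [linarith [hs.2]; linarith [hs.1]]

lemma norm_mul_le_one {a b : ℝ} (ha : ‖a‖ ≤ 1) (hb : ‖b‖ ≤ 1) : ‖a * b‖ ≤ 1 := by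
  rw [norm_mul]
  calc ‖a‖ * ‖b‖ ≤ 1 * 1 := mul_le_mul ha hb (norm_nonneg _) zero_le_one
    _ = 1 := one_mul 1

lemma ite_min (x y s : ℝ) :
    (if s ≤ min x y then (1:ℝ) else 0)
      = (if s ≤ x then (1:ℝ) else 0) * (if s ≤ y then (1:ℝ) else 0) := by
  split_ifs with h1 h2 h3 <;> simp_all [le_min_iff]

lemma Fmin_int (hf : MemLp f 2 unitMeasure)
    {F : ℝ → ℝ} (hF : ∀ t, F t = ∫ s in Set.Icc (0:ℝ) t, (f s) ^ 2)
    {x : ℝ} (hx : x ∈ Icc (0:ℝ) 1) :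
    ∫ v in Icc (0:ℝ) 1, F (min x v)
      = ∫ s, f s ^ 2 * ((if s ≤ x then (1:ℝ) else 0) * (1 - s)) ∂unitMeasure := by
  have step1 : ∀ v ∈ Icc (0:ℝ) 1, F (min x v)
      = ∫ s, f s ^ 2 * ((if s ≤ x then (1:ℝ) else 0) * (if s ≤ v then (1:ℝ) else 0))
          ∂unitMeasure := by
    intro v hv
    have hmem : min x v ∈ Icc (0:ℝ) 1 := ⟨le_min hx.1 hv.1, min_le_of_left_le hx.2⟩
    rw [hF, ← indicator_int (min x v) hmem]
    refine integral_congr_ae (Eventually.of_forall fun s => ?_)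
    dsimp only
    rw [ite_min]
  have hint : Integrable
      (Function.uncurry fun v s => f s ^ 2 *
        ((if s ≤ x then (1:ℝ) else 0) * (if s ≤ v then (1:ℝ) else 0)))
      (unitMeasure.prod unitMeasure) := by
    have hdom : Integrable (fun p : ℝ × ℝ => (1:ℝ) * f p.2 ^ 2)
        (unitMeasure.prod unitMeasure) := (integrable_const 1).mul_prod hf.integrable_sq
    refine hdom.mono' (AEStronglyMeasurable.mul ?_ ?_) (Eventually.of_forall fun p => ?_)
    · exact hf.integrable_sq.aestronglyMeasurable.comp_quasiMeasurePreserving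
        Measure.quasiMeasurePreserving_snd
    · refine Measurable.aestronglyMeasurable (Measurable.mul ?_ ?_)
      · exact Measurable.ite (measurableSet_le measurable_snd measurable_const)
          measurable_const measurable_const
      · exact Measurable.ite (measurableSet_le measurable_snd measurable_fst)
          measurable_const measurable_const
    · simp only [Function.uncurry, norm_mul, norm_pow, one_mul]
      split_ifs <;> simp [abs_of_nonneg, sq_nonneg, sq_abs, abs_nonneg]
  calc ∫ v in Icc (0:ℝ) 1, F (min x v)
      = ∫ v, F (min x v) ∂unitMeasure := rfl
    _ = ∫ v, ∫ s, f s ^ 2 *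
          ((if s ≤ x then (1:ℝ) else 0) * (if s ≤ v then (1:ℝ) else 0))
          ∂unitMeasure ∂unitMeasure := by
        refine integral_congr_ae ?_
        filter_upwards [ae_mem_unit] with v hv using step1 v hv
    _ = ∫ s, ∫ v, f s ^ 2 *
          ((if s ≤ x then (1:ℝ) else 0) * (if s ≤ v then (1:ℝ) else 0))
          ∂unitMeasure ∂unitMeasure := integral_integral_swap hint
    _ = ∫ s, f s ^ 2 * ((if s ≤ x then (1:ℝ) else 0) * (1 - s)) ∂unitMeasure := by
        refine integral_congr_ae ?_
        filter_upwards [ae_mem_unit] with s hs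
        have h1 : (fun v => f s ^ 2 *
            ((if s ≤ x then (1:ℝ) else 0) * (if s ≤ v then (1:ℝ) else 0)))
            = fun v => (f s ^ 2 * (if s ≤ x then (1:ℝ) else 0)) *
                (if s ≤ v then (1:ℝ) else 0) := by
          funext v; ring
        rw [h1, integral_const_mul, integral_ite_ge hs]
        ring

lemma Fmin_int2 (hf : MemLp f 2 unitMeasure)
    {F : ℝ → ℝ} (hF : ∀ t, F t = ∫ s in Set.Icc (0:ℝ) t, (f s) ^ 2) :
    ∫ v in Icc (0:ℝ) 1, ∫ w in Icc (0:ℝ) 1, F (min v w)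
      = ∫ s, f s ^ 2 * ((1 - s) * (1 - s)) ∂unitMeasure := by
  have hint : Integrable
      (Function.uncurry fun v s => f s ^ 2 *
        ((if s ≤ v then (1:ℝ) else 0) * (1 - s)))
      (unitMeasure.prod unitMeasure) := by
    have hdom : Integrable (fun p : ℝ × ℝ => (1:ℝ) * f p.2 ^ 2)
        (unitMeasure.prod unitMeasure) := (integrable_const 1).mul_prod hf.integrable_sq
    refine hdom.mono' (AEStronglyMeasurable.mul ?_ ?_) ?_
    · exact hf.integrable_sq.aestronglyMeasurable.comp_quasiMeasurePreserving
        Measure.quasiMeasurePreserving_snd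
    · refine Measurable.aestronglyMeasurable (Measurable.mul ?_ ?_)
      · exact Measurable.ite (measurableSet_le measurable_snd measurable_fst)
          measurable_const measurable_const
      · fun_prop
    · have h2 : ∀ᵐ p ∂(unitMeasure.prod unitMeasure), p.2 ∈ Icc (0:ℝ) 1 :=
        Measure.quasiMeasurePreserving_snd.ae ae_mem_unit
      filter_upwards [h2] with p hp
      simp only [Function.uncurry, one_mul]
      have hb : ‖(if p.2 ≤ p.1 then (1:ℝ) else 0) * (1 - p.2)‖ ≤ 1 := by
        rw [norm_mul]
        have e1 : ‖if p.2 ≤ p.1 then (1:ℝ) else 0‖ ≤ 1 := by split_ifs <;> simp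
        have e2 : ‖1 - p.2‖ ≤ 1 := by
          rw [Real.norm_eq_abs, abs_le]; constructor <;> [linarith [hp.2]; linarith [hp.1]]
        calc ‖if p.2 ≤ p.1 then (1:ℝ) else 0‖ * ‖1 - p.2‖ ≤ 1 * 1 :=
              mul_le_mul e1 e2 (norm_nonneg _) zero_le_one
          _ = 1 := by ring
      have heq : ‖f p.2 ^ 2 * ((if p.2 ≤ p.1 then (1:ℝ) else 0) * (1 - p.2))‖
          = f p.2 ^ 2 * ‖(if p.2 ≤ p.1 then (1:ℝ) else 0) * (1 - p.2)‖ := by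
        rw [norm_mul, Real.norm_eq_abs (f p.2 ^ 2), abs_of_nonneg (sq_nonneg _)]
      rw [heq]
      nlinarith [sq_nonneg (f p.2), norm_nonneg ((if p.2 ≤ p.1 then (1:ℝ) else 0) * (1 - p.2))]
  calc ∫ v in Icc (0:ℝ) 1, ∫ w in Icc (0:ℝ) 1, F (min v w)
      = ∫ v, ∫ s, f s ^ 2 *
          ((if s ≤ v then (1:ℝ) else 0) * (1 - s)) ∂unitMeasure ∂unitMeasure := by
        refine integral_congr_ae ?_
        filter_upwards [ae_mem_unit] with v hv
        exact Fmin_int hf hF hv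
    _ = ∫ s, ∫ v, f s ^ 2 *
          ((if s ≤ v then (1:ℝ) else 0) * (1 - s)) ∂unitMeasure ∂unitMeasure :=
        integral_integral_swap hint
    _ = ∫ s, f s ^ 2 * ((1 - s) * (1 - s)) ∂unitMeasure := by
        refine integral_congr_ae ?_
        filter_upwards [ae_mem_unit] with s hs
        have h1 : (fun v => f s ^ 2 *
            ((if s ≤ v then (1:ℝ) else 0) * (1 - s)))
            = fun v => (f s ^ 2 * (1 - s)) * (if s ≤ v then (1:ℝ) else 0) := by
          funext v; ring
        rw [h1, integral_const_mul, integral_ite_ge hs]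
        ring

lemma kernel1 (hf : MemLp f 2 unitMeasure)
    {F : ℝ → ℝ} (hF : ∀ t, F t = ∫ s in Set.Icc (0:ℝ) t, (f s) ^ 2)
    {x y : ℝ} (hx : x ∈ Icc (0:ℝ) 1) (hy : y ∈ Icc (0:ℝ) 1) :
    ∫ s, f s ^ 2 * (gk x s * gk y s) ∂unitMeasure
      = F (min x y) - (∫ v in Set.Icc (0:ℝ) 1, F (min x v))
        - (∫ w in Set.Icc (0:ℝ) 1, F (min w y))
        + ∫ v in Set.Icc (0:ℝ) 1, ∫ w in Set.Icc (0:ℝ) 1, F (min v w) := by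
  have hmem : min x y ∈ Icc (0:ℝ) 1 := ⟨le_min hx.1 hy.1, min_le_of_left_le hx.2⟩
  have hT1 : Integrable (fun s => f s ^ 2 *
      ((if s ≤ x then (1:ℝ) else 0) * (if s ≤ y then (1:ℝ) else 0))) unitMeasure :=
    integrable_sq_mul hf ((meas_ite_le_const x).mul (meas_ite_le_const y))
      (Eventually.of_forall fun s => norm_mul_le_one (abs_ite_le _) (abs_ite_le _))
  have hT2 : Integrable (fun s => f s ^ 2 *
      ((if s ≤ x then (1:ℝ) else 0) * (1 - s))) unitMeasure := by
    refine integrable_sq_mul hf ((meas_ite_le_const x).mul (by fun_prop)) (c := 1) ?_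
    filter_upwards [ae_mem_unit] with s hs
    exact norm_mul_le_one (abs_ite_le _) (abs_one_sub_le hs)
  have hT3 : Integrable (fun s => f s ^ 2 *
      ((if s ≤ y then (1:ℝ) else 0) * (1 - s))) unitMeasure := by
    refine integrable_sq_mul hf ((meas_ite_le_const y).mul (by fun_prop)) (c := 1) ?_
    filter_upwards [ae_mem_unit] with s hs
    exact norm_mul_le_one (abs_ite_le _) (abs_one_sub_le hs)
  have hT4 : Integrable (fun s => f s ^ 2 * ((1 - s) * (1 - s))) unitMeasure := by
    refine integrable_sq_mul hf (by fun_prop) (c := 1) ?_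
    filter_upwards [ae_mem_unit] with s hs
    exact norm_mul_le_one (abs_one_sub_le hs) (abs_one_sub_le hs)
  have e1 : ∫ s, f s ^ 2 *
      ((if s ≤ x then (1:ℝ) else 0) * (if s ≤ y then (1:ℝ) else 0)) ∂unitMeasure
      = F (min x y) := by
    rw [hF, ← indicator_int (min x y) hmem]
    refine integral_congr_ae (Eventually.of_forall fun s => ?_)
    dsimp only
    rw [ite_min]
  have e2 : ∫ s, f s ^ 2 *
      ((if s ≤ x then (1:ℝ) else 0) * (1 - s)) ∂unitMeasure
      = ∫ v in Set.Icc (0:ℝ) 1, F (min x v) := (Fmin_int hf hF hx).symm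
  have e3 : ∫ s, f s ^ 2 *
      ((if s ≤ y then (1:ℝ) else 0) * (1 - s)) ∂unitMeasure
      = ∫ w in Set.Icc (0:ℝ) 1, F (min w y) := by
    have h1 : (∫ w in Set.Icc (0:ℝ) 1, F (min w y)) = ∫ w in Set.Icc (0:ℝ) 1, F (min y w) := by
      refine integral_congr_ae (Eventually.of_forall fun w => ?_)
      dsimp only
      rw [min_comm]
    rw [h1]
    exact (Fmin_int hf hF hy).symm
  have e4 : ∫ s, f s ^ 2 * ((1 - s) * (1 - s)) ∂unitMeasure
      = ∫ v in Set.Icc (0:ℝ) 1, ∫ w in Set.Icc (0:ℝ) 1, F (min v w) := (Fmin_int2 hf hF).symm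
  calc ∫ s, f s ^ 2 * (gk x s * gk y s) ∂unitMeasure
      = ∫ s, (f s ^ 2 * ((if s ≤ x then (1:ℝ) else 0) * (if s ≤ y then (1:ℝ) else 0))
          - f s ^ 2 * ((if s ≤ x then (1:ℝ) else 0) * (1 - s))
          - f s ^ 2 * ((if s ≤ y then (1:ℝ) else 0) * (1 - s))
          + f s ^ 2 * ((1 - s) * (1 - s))) ∂unitMeasure := by
        refine integral_congr_ae (Eventually.of_forall fun s => ?_)
        dsimp only
        unfold gk
        ring
    _ = (∫ s, f s ^ 2 *
          ((if s ≤ x then (1:ℝ) else 0) * (if s ≤ y then (1:ℝ) else 0)) ∂unitMeasure)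
        - (∫ s, f s ^ 2 * ((if s ≤ x then (1:ℝ) else 0) * (1 - s)) ∂unitMeasure)
        - (∫ s, f s ^ 2 * ((if s ≤ y then (1:ℝ) else 0) * (1 - s)) ∂unitMeasure)
        + ∫ s, f s ^ 2 * ((1 - s) * (1 - s)) ∂unitMeasure := by
        have hT12 : Integrable (fun s => f s ^ 2 *
            ((if s ≤ x then (1:ℝ) else 0) * (if s ≤ y then (1:ℝ) else 0))
            - f s ^ 2 * ((if s ≤ x then (1:ℝ) else 0) * (1 - s))) unitMeasure := hT1.sub hT2
        have hT123 : Integrable (fun s => f s ^ 2 *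
            ((if s ≤ x then (1:ℝ) else 0) * (if s ≤ y then (1:ℝ) else 0))
            - f s ^ 2 * ((if s ≤ x then (1:ℝ) else 0) * (1 - s))
            - f s ^ 2 * ((if s ≤ y then (1:ℝ) else 0) * (1 - s))) unitMeasure := hT12.sub hT3
        rw [integral_add hT123 hT4, integral_sub hT12 hT3, integral_sub hT1 hT2]
    _ = _ := by rw [e1, e2, e3, e4]

lemma ite_max (x y s : ℝ) :
    (if max x y ≤ s then (1:ℝ) else 0)
      = (if x ≤ s then (1:ℝ) else 0) * (if y ≤ s then (1:ℝ) else 0) := by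
  split_ifs with h1 h2 h3 <;> simp_all [max_le_iff]

lemma kernel2 {x y : ℝ} (hx : x ∈ Icc (0:ℝ) 1) (hy : y ∈ Icc (0:ℝ) 1) :
    ∫ s, gk s x * gk s y ∂unitMeasure = min x y - x * y := by
  have hmax : max x y ∈ Icc (0:ℝ) 1 := ⟨le_trans hx.1 (le_max_left x y), max_le hx.2 hy.2⟩
  have hI1 : Integrable (fun s => (if x ≤ s then (1:ℝ) else 0) *
      (if y ≤ s then (1:ℝ) else 0)) unitMeasure :=
    integrable_bdd ((meas_ite_const_le x).mul (meas_ite_const_le y))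
      (Eventually.of_forall fun s => norm_mul_le_one (abs_ite_le _) (abs_ite_le _))
  have hI2 : Integrable (fun s => (1 - y) * (if x ≤ s then (1:ℝ) else 0)) unitMeasure :=
    Integrable.const_mul (integrable_bdd (meas_ite_const_le x)
      (Eventually.of_forall fun s => abs_ite_le _)) _
  have hI3 : Integrable (fun s => (1 - x) * (if y ≤ s then (1:ℝ) else 0)) unitMeasure :=
    Integrable.const_mul (integrable_bdd (meas_ite_const_le y)
      (Eventually.of_forall fun s => abs_ite_le _)) _
  have hI4 : Integrable (fun _ : ℝ => (1 - x) * (1 - y)) unitMeasure := integrable_const _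
  have v1 : ∫ s, (if x ≤ s then (1:ℝ) else 0) * (if y ≤ s then (1:ℝ) else 0) ∂unitMeasure
      = 1 - max x y := by
    rw [← integral_ite_ge hmax]
    refine integral_congr_ae (Eventually.of_forall fun s => ?_)
    dsimp only
    rw [ite_max]
  have v2 : ∫ s, (1 - y) * (if x ≤ s then (1:ℝ) else 0) ∂unitMeasure = (1 - y) * (1 - x) := by
    rw [integral_const_mul, integral_ite_ge hx]
  have v3 : ∫ s, (1 - x) * (if y ≤ s then (1:ℝ) else 0) ∂unitMeasure = (1 - x) * (1 - y) := by
    rw [integral_const_mul, integral_ite_ge hy]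
  have v4 : ∫ _ : ℝ, (1 - x) * (1 - y) ∂unitMeasure = (1 - x) * (1 - y) := by
    rw [integral_const]
    simp [measure_univ]
  calc ∫ s, gk s x * gk s y ∂unitMeasure
      = ∫ s, ((if x ≤ s then (1:ℝ) else 0) * (if y ≤ s then (1:ℝ) else 0)
          - (1 - y) * (if x ≤ s then (1:ℝ) else 0)
          - (1 - x) * (if y ≤ s then (1:ℝ) else 0)
          + (1 - x) * (1 - y)) ∂unitMeasure := by
        refine integral_congr_ae (Eventually.of_forall fun s => ?_)
        dsimp only
        unfold gk
        ring
    _ = (1 - max x y) - (1 - y) * (1 - x) - (1 - x) * (1 - y) + (1 - x) * (1 - y) := by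
        have hI12 : Integrable (fun s => (if x ≤ s then (1:ℝ) else 0) *
            (if y ≤ s then (1:ℝ) else 0)
            - (1 - y) * (if x ≤ s then (1:ℝ) else 0)) unitMeasure := hI1.sub hI2
        have hI123 : Integrable (fun s => (if x ≤ s then (1:ℝ) else 0) *
            (if y ≤ s then (1:ℝ) else 0)
            - (1 - y) * (if x ≤ s then (1:ℝ) else 0)
            - (1 - x) * (if y ≤ s then (1:ℝ) else 0)) unitMeasure := hI12.sub hI3
        rw [integral_add hI123 hI4, integral_sub hI12 hI3, integral_sub hI1 hI2, v1, v2, v3, v4]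
    _ = min x y - x * y := by
        have h := min_add_max x y
        ring_nf
        linarith [h]

/-! ### The operators S and R -/

/-- `(S u)(x) = f(x) ∫ gk(y,x) u(y) dy`. -/
def Sfun (f : ℝ → ℝ) (u : ℝ → ℂ) (x : ℝ) : ℂ :=
  (f x : ℂ) * ∫ y, (gk y x : ℂ) * u y ∂unitMeasure

/-- `(R u)(x) = ∫ f(y) gk(x,y) u(y) dy`. -/
def Rfun (f : ℝ → ℝ) (u : ℝ → ℂ) (x : ℝ) : ℂ :=
  ∫ y, ((f y : ℂ) * (gk x y : ℂ)) * u y ∂unitMeasure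

lemma gk_abs_le_right (x s : ℝ) : |gk s x| ≤ 1 + |1 - x| := by
  have h1 := le_abs_self (1 - x)
  have h2 := neg_abs_le (1 - x)
  unfold gk
  split_ifs <;> rw [abs_le] <;> constructor <;> linarith

lemma u_int (u : Lp ℂ 2 unitMeasure) : Integrable (⇑u) unitMeasure :=
  (Lp.memLp u).integrable one_le_two

/-- `y ↦ f(y)u(y)` is integrable (Cauchy-Schwarz). -/
lemma int_mul_u (hf : MemLp f 2 unitMeasure) (u : Lp ℂ 2 unitMeasure) :
    Integrable (fun y => (f y : ℂ) * u y) unitMeasure := by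
  have h : MemLp (f • (⇑u)) 1 unitMeasure :=
    MemLp.smul (Lp.memLp u) hf (r := 1)
  have h2 : Integrable (f • (⇑u)) unitMeasure := memLp_one_iff_integrable.mp h
  exact h2.congr (Eventually.of_forall fun y => by
    simp [Pi.smul_apply, Complex.real_smul])

lemma int_gk_u (x : ℝ) (u : Lp ℂ 2 unitMeasure) :
    Integrable (fun y => (gk y x : ℂ) * u y) unitMeasure := by
  refine Integrable.bdd_mul (c := 1 + |1 - x|) (u_int u) ?_
    (Eventually.of_forall fun y => ?_)
  · exact (Complex.measurable_ofReal.comp (gk_meas_right x)).aestronglyMeasurable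
  · rw [Complex.norm_real, Real.norm_eq_abs]
    exact gk_abs_le_right x y

lemma int_fgk_u (hf : MemLp f 2 unitMeasure) (x : ℝ) (u : Lp ℂ 2 unitMeasure) :
    Integrable (fun y => ((f y : ℂ) * (gk x y : ℂ)) * u y) unitMeasure := by
  have h : Integrable (fun y => (gk x y : ℂ) * ((f y : ℂ) * u y)) unitMeasure := by
    refine Integrable.bdd_mul (c := 1) (int_mul_u hf u) ?_ ?_
    · exact (Complex.measurable_ofReal.comp (gk_meas_left x)).aestronglyMeasurable
    · filter_upwards [ae_mem_unit] with y hy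
      rw [Complex.norm_real, Real.norm_eq_abs]
      exact gk_abs_le hy
  exact h.congr (Eventually.of_forall fun y => by ring)

lemma Sfun_mem (hf : MemLp f 2 unitMeasure) (u : Lp ℂ 2 unitMeasure) : MemLp (Sfun f u) 2 unitMeasure := by
  have hasm : AEStronglyMeasurable (Sfun f u) unitMeasure := by
    unfold Sfun
    refine AEStronglyMeasurable.mul ?_ ?_
    · exact Complex.continuous_ofReal.comp_aestronglyMeasurable hf.1
    · refine AEStronglyMeasurable.integral_prod_right'
        (f := fun p : ℝ × ℝ => (gk p.2 p.1 : ℂ) * u p.2) ?_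
      refine AEStronglyMeasurable.mul ?_ ?_
      · exact (Complex.measurable_ofReal.comp gk_meas_swap).aestronglyMeasurable
      · exact (Lp.aestronglyMeasurable u).comp_quasiMeasurePreserving
          Measure.quasiMeasurePreserving_snd
  refine MemLp.of_le_mul hf hasm (c := 2 * ∫ y, ‖u y‖ ∂unitMeasure) ?_
  filter_upwards [ae_mem_unit] with x hx
  have hbound : ‖∫ y, (gk y x : ℂ) * u y ∂unitMeasure‖ ≤ 2 * ∫ y, ‖u y‖ ∂unitMeasure := by
    calc ‖∫ y, (gk y x : ℂ) * u y ∂unitMeasure‖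
        ≤ ∫ y, ‖(gk y x : ℂ) * u y‖ ∂unitMeasure := norm_integral_le_integral_norm _
      _ ≤ ∫ y, 2 * ‖u y‖ ∂unitMeasure := by
          refine integral_mono_of_nonneg (Eventually.of_forall fun y => norm_nonneg _)
            ((u_int u).norm.const_mul 2) (Eventually.of_forall fun y => ?_)
          dsimp only
          rw [norm_mul, Complex.norm_real, Real.norm_eq_abs]
          exact mul_le_mul_of_nonneg_right (gk_abs_le' hx) (norm_nonneg _)
      _ = 2 * ∫ y, ‖u y‖ ∂unitMeasure := integral_const_mul 2 _
  calc ‖Sfun f u x‖ = ‖(f x : ℂ)‖ * ‖∫ y, (gk y x : ℂ) * u y ∂unitMeasure‖ := norm_mul _ _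
    _ ≤ ‖(f x : ℂ)‖ * (2 * ∫ y, ‖u y‖ ∂unitMeasure) :=
        mul_le_mul_of_nonneg_left hbound (norm_nonneg _)
    _ = (2 * ∫ y, ‖u y‖ ∂unitMeasure) * ‖f x‖ := by rw [Complex.norm_real]; ring

lemma Rfun_mem (hf : MemLp f 2 unitMeasure) (u : Lp ℂ 2 unitMeasure) : MemLp (Rfun f u) 2 unitMeasure := by
  have hasm : AEStronglyMeasurable (Rfun f u) unitMeasure := by
    unfold Rfun
    refine AEStronglyMeasurable.integral_prod_right'
      (f := fun p : ℝ × ℝ => ((f p.2 : ℂ) * (gk p.1 p.2 : ℂ)) * u p.2) ?_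
    refine AEStronglyMeasurable.mul (AEStronglyMeasurable.mul ?_ ?_) ?_
    · exact Complex.continuous_ofReal.comp_aestronglyMeasurable
        (hf.1.comp_quasiMeasurePreserving Measure.quasiMeasurePreserving_snd)
    · exact (Complex.measurable_ofReal.comp gk_meas).aestronglyMeasurable
    · exact (Lp.aestronglyMeasurable u).comp_quasiMeasurePreserving
        Measure.quasiMeasurePreserving_snd
  refine MemLp.of_le_mul (memLp_const (1:ℝ) (p := 2) (μ := unitMeasure)) hasm
    (c := ∫ y, ‖(f y : ℂ) * u y‖ ∂unitMeasure) ?_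
  filter_upwards [ae_mem_unit] with x hx
  have hbound : ‖Rfun f u x‖ ≤ ∫ y, ‖(f y : ℂ) * u y‖ ∂unitMeasure := by
    calc ‖Rfun f u x‖
        ≤ ∫ y, ‖((f y : ℂ) * (gk x y : ℂ)) * u y‖ ∂unitMeasure :=
          norm_integral_le_integral_norm _
      _ ≤ ∫ y, ‖(f y : ℂ) * u y‖ ∂unitMeasure := by
          refine integral_mono_of_nonneg (Eventually.of_forall fun y => norm_nonneg _)
            (int_mul_u hf u).norm ?_
          filter_upwards [ae_mem_unit] with y hy
          have h1 : ‖((f y : ℂ) * (gk x y : ℂ)) * u y‖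
              = ‖(f y : ℂ) * u y‖ * |gk x y| := by
            rw [norm_mul, norm_mul, norm_mul, Complex.norm_real (gk x y), Real.norm_eq_abs]
            ring
          rw [h1]
          calc ‖(f y : ℂ) * u y‖ * |gk x y| ≤ ‖(f y : ℂ) * u y‖ * 1 :=
                mul_le_mul_of_nonneg_left (gk_abs_le hy) (norm_nonneg _)
            _ = ‖(f y : ℂ) * u y‖ := mul_one _
  calc ‖Rfun f u x‖ ≤ ∫ y, ‖(f y : ℂ) * u y‖ ∂unitMeasure := hbound
    _ = (∫ y, ‖(f y : ℂ) * u y‖ ∂unitMeasure) * ‖(1:ℝ)‖ := by simp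

lemma Sfun_congr (u v : ℝ → ℂ) (h : u =ᵐ[unitMeasure] v) : Sfun f u = Sfun f v := by
  funext x
  unfold Sfun
  congr 1
  refine integral_congr_ae (h.mono fun y hy => ?_)
  dsimp only
  rw [hy]

lemma Rfun_congr (u v : ℝ → ℂ) (h : u =ᵐ[unitMeasure] v) : Rfun f u = Rfun f v := by
  funext x
  unfold Rfun
  refine integral_congr_ae (h.mono fun y hy => ?_)
  dsimp only
  rw [hy]

lemma Sfun_add (u v : Lp ℂ 2 unitMeasure) :
    Sfun f (⇑u + ⇑v) = fun x => Sfun f ⇑u x + Sfun f ⇑v x := by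
  funext x
  unfold Sfun
  have h : ∫ y, (gk y x : ℂ) * (⇑u + ⇑v) y ∂unitMeasure
      = (∫ y, (gk y x : ℂ) * u y ∂unitMeasure) + ∫ y, (gk y x : ℂ) * v y ∂unitMeasure := by
    rw [← integral_add (int_gk_u x u) (int_gk_u x v)]
    refine integral_congr_ae (Eventually.of_forall fun y => ?_)
    dsimp only [Pi.add_apply]
    ring
  rw [h]
  ring

lemma Sfun_smul (c : ℂ) (u : Lp ℂ 2 unitMeasure) :
    Sfun f (c • ⇑u) = fun x => c * Sfun f ⇑u x := by
  funext x
  unfold Sfun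
  have h : ∫ y, (gk y x : ℂ) * (c • ⇑u) y ∂unitMeasure
      = c * ∫ y, (gk y x : ℂ) * u y ∂unitMeasure := by
    rw [← integral_const_mul]
    refine integral_congr_ae (Eventually.of_forall fun y => ?_)
    dsimp only [Pi.smul_apply, smul_eq_mul]
    ring
  rw [h]
  ring

lemma Rfun_add (hf : MemLp f 2 unitMeasure) (u v : Lp ℂ 2 unitMeasure) :
    Rfun f (⇑u + ⇑v) = fun x => Rfun f ⇑u x + Rfun f ⇑v x := by
  funext x
  unfold Rfun
  rw [← integral_add (int_fgk_u hf x u) (int_fgk_u hf x v)]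
  refine integral_congr_ae (Eventually.of_forall fun y => ?_)
  dsimp only [Pi.add_apply]
  ring

lemma Rfun_smul (c : ℂ) (u : Lp ℂ 2 unitMeasure) :
    Rfun f (c • ⇑u) = fun x => c * Rfun f ⇑u x := by
  funext x
  unfold Rfun
  rw [← integral_const_mul]
  refine integral_congr_ae (Eventually.of_forall fun y => ?_)
  dsimp only [Pi.smul_apply, smul_eq_mul]
  ring

/-- The operator `S` as a linear map on `L²`. -/
def SL (hf : MemLp f 2 unitMeasure) : Lp ℂ 2 unitMeasure →ₗ[ℂ] Lp ℂ 2 unitMeasure where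
  toFun u := (Sfun_mem hf u).toLp (Sfun f ⇑u)
  map_add' u v := by
    apply Lp.ext
    have e1 : Sfun f ⇑(u + v) = Sfun f (⇑u + ⇑v) := Sfun_congr _ _ (Lp.coeFn_add u v)
    filter_upwards [MemLp.coeFn_toLp (Sfun_mem hf (u + v)),
      Lp.coeFn_add ((Sfun_mem hf u).toLp (Sfun f ⇑u)) ((Sfun_mem hf v).toLp (Sfun f ⇑v)),
      MemLp.coeFn_toLp (Sfun_mem hf u), MemLp.coeFn_toLp (Sfun_mem hf v)] with x h1 h2 h3 h4
    rw [h1, h2, Pi.add_apply, h3, h4, e1, Sfun_add]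
  map_smul' c u := by
    simp only [RingHom.id_apply]
    apply Lp.ext
    have e1 : Sfun f ⇑(c • u) = Sfun f (c • ⇑u) := Sfun_congr _ _ (Lp.coeFn_smul c u)
    filter_upwards [MemLp.coeFn_toLp (Sfun_mem hf (c • u)),
      Lp.coeFn_smul c ((Sfun_mem hf u).toLp (Sfun f ⇑u)),
      MemLp.coeFn_toLp (Sfun_mem hf u)] with x h1 h2 h3
    rw [h1, h2, Pi.smul_apply, h3, e1, Sfun_smul, smul_eq_mul]

/-- The operator `R` as a linear map on `L²`. -/
def RL (hf : MemLp f 2 unitMeasure) : Lp ℂ 2 unitMeasure →ₗ[ℂ] Lp ℂ 2 unitMeasure where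
  toFun u := (Rfun_mem hf u).toLp (Rfun f ⇑u)
  map_add' u v := by
    apply Lp.ext
    have e1 : Rfun f ⇑(u + v) = Rfun f (⇑u + ⇑v) := Rfun_congr _ _ (Lp.coeFn_add u v)
    filter_upwards [MemLp.coeFn_toLp (Rfun_mem hf (u + v)),
      Lp.coeFn_add ((Rfun_mem hf u).toLp (Rfun f ⇑u)) ((Rfun_mem hf v).toLp (Rfun f ⇑v)),
      MemLp.coeFn_toLp (Rfun_mem hf u), MemLp.coeFn_toLp (Rfun_mem hf v)] with x h1 h2 h3 h4
    rw [h1, h2, Pi.add_apply, h3, h4, e1, Rfun_add hf]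
  map_smul' c u := by
    simp only [RingHom.id_apply]
    apply Lp.ext
    have e1 : Rfun f ⇑(c • u) = Rfun f (c • ⇑u) := Rfun_congr _ _ (Lp.coeFn_smul c u)
    filter_upwards [MemLp.coeFn_toLp (Rfun_mem hf (c • u)),
      Lp.coeFn_smul c ((Rfun_mem hf u).toLp (Rfun f ⇑u)),
      MemLp.coeFn_toLp (Rfun_mem hf u)] with x h1 h2 h3
    rw [h1, h2, Pi.smul_apply, h3, e1, Rfun_smul, smul_eq_mul]

lemma SL_apply (hf : MemLp f 2 unitMeasure) (u : Lp ℂ 2 unitMeasure) :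
    ⇑(SL hf u) =ᵐ[unitMeasure] Sfun f ⇑u := MemLp.coeFn_toLp (Sfun_mem hf u)

lemma RL_apply (hf : MemLp f 2 unitMeasure) (u : Lp ℂ 2 unitMeasure) :
    ⇑(RL hf u) =ᵐ[unitMeasure] Rfun f ⇑u := MemLp.coeFn_toLp (Rfun_mem hf u)

/-- Factorization `K₁ = R ∘ S`, almost everywhere. -/
lemma factor1_ae (hf : MemLp f 2 unitMeasure) {F : ℝ → ℝ}
    (hF : ∀ t, F t = ∫ s in Set.Icc (0:ℝ) t, (f s) ^ 2) (u : Lp ℂ 2 unitMeasure) :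
    ∀ᵐ x ∂unitMeasure,
      ∫ y, ((F (min x y) - (∫ v in Set.Icc (0:ℝ) 1, F (min x v))
        - (∫ w in Set.Icc (0:ℝ) 1, F (min w y))
        + ∫ v in Set.Icc (0:ℝ) 1, ∫ w in Set.Icc (0:ℝ) 1, F (min v w) : ℝ) : ℂ)
        * u y ∂unitMeasure = Rfun f (Sfun f ⇑u) x := by
  filter_upwards [ae_mem_unit] with x hx
  have hint : Integrable (Function.uncurry fun s y =>
      ((f s ^ 2 * (gk x s * gk y s) : ℝ) : ℂ) * u y) (unitMeasure.prod unitMeasure) := by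
    have hdom : Integrable (fun p : ℝ × ℝ => (2 * f p.1 ^ 2) * ‖u p.2‖)
        (unitMeasure.prod unitMeasure) :=
      (hf.integrable_sq.const_mul 2).mul_prod (u_int u).norm
    refine hdom.mono' (AEStronglyMeasurable.mul ?_ ?_) ?_
    · refine Complex.continuous_ofReal.comp_aestronglyMeasurable ?_
      refine AEStronglyMeasurable.mul ?_ ?_
      · exact hf.integrable_sq.aestronglyMeasurable.comp_quasiMeasurePreserving
          Measure.quasiMeasurePreserving_fst
      · exact (((gk_meas_left x).comp measurable_fst).mul gk_meas_swap).aestronglyMeasurable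
    · exact (Lp.aestronglyMeasurable u).comp_quasiMeasurePreserving
        Measure.quasiMeasurePreserving_snd
    · filter_upwards [Measure.quasiMeasurePreserving_fst.ae ae_mem_unit] with p hp
      have b1 : |gk x p.1| ≤ 1 := gk_abs_le hp
      have b2 : |gk p.2 p.1| ≤ 2 := gk_abs_le' hp
      have heq : ‖Function.uncurry (fun s y => ((f s ^ 2 * (gk x s * gk y s) : ℝ) : ℂ) * u y) p‖
          = f p.1 ^ 2 * (|gk x p.1| * |gk p.2 p.1|) * ‖u p.2‖ := by
        simp only [Function.uncurry]
        rw [norm_mul, Complex.norm_real, Real.norm_eq_abs, abs_mul, abs_mul,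
          abs_of_nonneg (sq_nonneg (f p.1))]
      rw [heq]
      have hb : |gk x p.1| * |gk p.2 p.1| ≤ 2 := by
        calc |gk x p.1| * |gk p.2 p.1| ≤ 1 * 2 :=
              mul_le_mul b1 b2 (abs_nonneg _) zero_le_one
          _ = 2 := one_mul 2
      calc f p.1 ^ 2 * (|gk x p.1| * |gk p.2 p.1|) * ‖u p.2‖
          ≤ f p.1 ^ 2 * 2 * ‖u p.2‖ := by
            refine mul_le_mul_of_nonneg_right ?_ (norm_nonneg _)
            exact mul_le_mul_of_nonneg_left hb (sq_nonneg _)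
        _ = 2 * f p.1 ^ 2 * ‖u p.2‖ := by ring
  have hcalc : Rfun f (Sfun f ⇑u) x
      = ∫ y, ((F (min x y) - (∫ v in Set.Icc (0:ℝ) 1, F (min x v))
          - (∫ w in Set.Icc (0:ℝ) 1, F (min w y))
          + ∫ v in Set.Icc (0:ℝ) 1, ∫ w in Set.Icc (0:ℝ) 1, F (min v w) : ℝ) : ℂ)
          * u y ∂unitMeasure := by
    calc Rfun f (Sfun f ⇑u) x
        = ∫ s, ∫ y, ((f s ^ 2 * (gk x s * gk y s) : ℝ) : ℂ) * u y
            ∂unitMeasure ∂unitMeasure := by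
          unfold Rfun Sfun
          refine integral_congr_ae (Eventually.of_forall fun s => ?_)
          dsimp only
          have h1 : ((f s : ℂ) * (gk x s : ℂ)) *
              ((f s : ℂ) * ∫ y, (gk y s : ℂ) * u y ∂unitMeasure)
              = ((f s : ℂ) * (f s : ℂ) * (gk x s : ℂ)) *
                ∫ y, (gk y s : ℂ) * u y ∂unitMeasure := by ring
          rw [h1, ← integral_const_mul]
          refine integral_congr_ae (Eventually.of_forall fun y => ?_)
          dsimp only
          push_cast
          ring
      _ = ∫ y, ∫ s, ((f s ^ 2 * (gk x s * gk y s) : ℝ) : ℂ) * u y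
            ∂unitMeasure ∂unitMeasure := integral_integral_swap hint
      _ = _ := by
          refine integral_congr_ae ?_
          filter_upwards [ae_mem_unit] with y hy
          rw [integral_mul_const, integral_complex_ofReal, kernel1 hf hF hx hy]
  exact hcalc.symm

/-- Factorization `K₂ = S ∘ R`, almost everywhere. -/
lemma factor2_ae (hf : MemLp f 2 unitMeasure) (u : Lp ℂ 2 unitMeasure) :
    ∀ᵐ x ∂unitMeasure,
      ∫ y, ((f x * f y * (min x y - x * y) : ℝ) : ℂ) * u y ∂unitMeasure
        = Sfun f (Rfun f ⇑u) x := by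
  filter_upwards [ae_mem_unit] with x hx
  have hfu_norm : Integrable (fun y => |f y| * ‖u y‖) unitMeasure := by
    refine (int_mul_u hf u).norm.congr (Eventually.of_forall fun y => ?_)
    dsimp only
    rw [norm_mul, Complex.norm_real, Real.norm_eq_abs]
  have hint : Integrable (Function.uncurry fun s y =>
      (gk s x : ℂ) * (((f y : ℂ) * (gk s y : ℂ)) * u y)) (unitMeasure.prod unitMeasure) := by
    have hdom : Integrable (fun p : ℝ × ℝ => (4:ℝ) * (|f p.2| * ‖u p.2‖))
        (unitMeasure.prod unitMeasure) := (integrable_const (4:ℝ)).mul_prod hfu_norm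
    refine hdom.mono' ?_ ?_
    · refine AEStronglyMeasurable.mul ?_ (AEStronglyMeasurable.mul (AEStronglyMeasurable.mul ?_ ?_) ?_)
      · exact (Complex.measurable_ofReal.comp
          ((gk_meas_right x).comp measurable_fst)).aestronglyMeasurable
      · exact Complex.continuous_ofReal.comp_aestronglyMeasurable
          (hf.1.comp_quasiMeasurePreserving Measure.quasiMeasurePreserving_snd)
      · exact (Complex.measurable_ofReal.comp gk_meas).aestronglyMeasurable
      · exact (Lp.aestronglyMeasurable u).comp_quasiMeasurePreserving
          Measure.quasiMeasurePreserving_snd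
    · filter_upwards [Measure.quasiMeasurePreserving_snd.ae ae_mem_unit] with p hp
      have b1 : |gk p.1 x| ≤ 2 := gk_abs_le' hx
      have b2 : |gk p.1 p.2| ≤ 2 := gk_abs_le' hp
      have heq : ‖Function.uncurry (fun s y =>
          (gk s x : ℂ) * (((f y : ℂ) * (gk s y : ℂ)) * u y)) p‖
          = |gk p.1 x| * (|f p.2| * |gk p.1 p.2| * ‖u p.2‖) := by
        simp only [Function.uncurry]
        rw [norm_mul, norm_mul, norm_mul, Complex.norm_real, Complex.norm_real,
          Complex.norm_real, Real.norm_eq_abs, Real.norm_eq_abs, Real.norm_eq_abs]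
      rw [heq]
      have c1 : |f p.2| * |gk p.1 p.2| * ‖u p.2‖ ≤ |f p.2| * 2 * ‖u p.2‖ := by
        refine mul_le_mul_of_nonneg_right ?_ (norm_nonneg _)
        exact mul_le_mul_of_nonneg_left b2 (abs_nonneg _)
      calc |gk p.1 x| * (|f p.2| * |gk p.1 p.2| * ‖u p.2‖)
          ≤ 2 * (|f p.2| * 2 * ‖u p.2‖) :=
            mul_le_mul b1 c1 (by positivity) (by norm_num)
        _ = 4 * (|f p.2| * ‖u p.2‖) := by ring
  have hcalc : Sfun f (Rfun f ⇑u) x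
      = ∫ y, ((f x * f y * (min x y - x * y) : ℝ) : ℂ) * u y ∂unitMeasure := by
    calc Sfun f (Rfun f ⇑u) x
        = (f x : ℂ) * ∫ s, ∫ y, (gk s x : ℂ) * (((f y : ℂ) * (gk s y : ℂ)) * u y)
            ∂unitMeasure ∂unitMeasure := by
          unfold Sfun Rfun
          congr 1
          refine integral_congr_ae (Eventually.of_forall fun s => ?_)
          dsimp only
          rw [← integral_const_mul]
      _ = (f x : ℂ) * ∫ y, ∫ s, (gk s x : ℂ) * (((f y : ℂ) * (gk s y : ℂ)) * u y)
            ∂unitMeasure ∂unitMeasure := by rw [integral_integral_swap hint]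
      _ = ∫ y, ((f x * f y * (min x y - x * y) : ℝ) : ℂ) * u y ∂unitMeasure := by
          rw [← integral_const_mul]
          refine integral_congr_ae ?_
          filter_upwards [ae_mem_unit] with y hy
          have h2 : ∫ s, (gk s x : ℂ) * (((f y : ℂ) * (gk s y : ℂ)) * u y) ∂unitMeasure
              = ((min x y - x * y : ℝ) : ℂ) * ((f y : ℂ) * u y) := by
            calc ∫ s, (gk s x : ℂ) * (((f y : ℂ) * (gk s y : ℂ)) * u y) ∂unitMeasure
                = ∫ s, ((gk s x * gk s y : ℝ) : ℂ) * ((f y : ℂ) * u y) ∂unitMeasure := by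
                  refine integral_congr_ae (Eventually.of_forall fun s => ?_)
                  dsimp only
                  push_cast
                  ring
              _ = (∫ s, ((gk s x * gk s y : ℝ) : ℂ) ∂unitMeasure) * ((f y : ℂ) * u y) :=
                  integral_mul_const _ _
              _ = ((∫ s, gk s x * gk s y ∂unitMeasure : ℝ) : ℂ) * ((f y : ℂ) * u y) := by
                  rw [integral_complex_ofReal]
              _ = ((min x y - x * y : ℝ) : ℂ) * ((f y : ℂ) * u y) := by
                  rw [kernel2 hx hy]
          rw [h2]
          push_cast
          ring
  exact hcalc.symm

end WithF

end Stmt7Aux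

/-- Let `f ∈ L²(0,1)` and `F(t) = ∫₀ᵗ f(s)² ds`.  The integral operator with kernel
`Q₁(x,y) = F(min(x,y)) - ∫₀¹F(min(x,u))du - ∫₀¹F(min(v,y))dv + ∫₀¹∫₀¹F(min(u,v))dudv`
(covariance of the centered stochastic integral `∫₀ˣ f dW`) and the integral operator
with kernel `Q₂(x,y) = f(x)f(y)(min(x,y) - xy)` (covariance of `f·B`) have the same
nonzero eigenvalues with multiplicities. -/
theorem statement7 (f : ℝ → ℝ) (hf : MemLp f 2 unitMeasure)
    (F : ℝ → ℝ) (hF : ∀ t, F t = ∫ s in Set.Icc (0:ℝ) t, (f s) ^ 2)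
    (K₁ K₂ : Lp ℂ 2 unitMeasure →L[ℂ] Lp ℂ 2 unitMeasure)
    (hK₁ : ∀ u : Lp ℂ 2 unitMeasure, ∀ᵐ x ∂unitMeasure,
      K₁ u x = ∫ y, ((F (min x y) - (∫ v in Set.Icc (0:ℝ) 1, F (min x v))
        - (∫ w in Set.Icc (0:ℝ) 1, F (min w y))
        + ∫ v in Set.Icc (0:ℝ) 1, ∫ w in Set.Icc (0:ℝ) 1, F (min v w) : ℝ) : ℂ)
        * u y ∂unitMeasure)
    (hK₂ : ∀ u : Lp ℂ 2 unitMeasure, ∀ᵐ x ∂unitMeasure,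
      K₂ u x = ∫ y, ((f x * f y * (min x y - x * y) : ℝ) : ℂ) * u y ∂unitMeasure) :
    SameNonzeroEigenvalues K₁ K₂ := by
  have hA : ∀ u, K₁ u = Stmt7Aux.RL hf (Stmt7Aux.SL hf u) := by
    intro u
    apply MeasureTheory.Lp.ext
    have h2 : Stmt7Aux.Rfun f ⇑(Stmt7Aux.SL hf u) = Stmt7Aux.Rfun f (Stmt7Aux.Sfun f ⇑u) :=
      Stmt7Aux.Rfun_congr _ _ (Stmt7Aux.SL_apply hf u)
    filter_upwards [hK₁ u, Stmt7Aux.factor1_ae hf hF u,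
      Stmt7Aux.RL_apply hf (Stmt7Aux.SL hf u)] with x e1 e2 e3
    rw [e1, e2, e3, h2]
  have hB : ∀ u, K₂ u = Stmt7Aux.SL hf (Stmt7Aux.RL hf u) := by
    intro u
    apply MeasureTheory.Lp.ext
    have h2 : Stmt7Aux.Sfun f ⇑(Stmt7Aux.RL hf u) = Stmt7Aux.Sfun f (Stmt7Aux.Rfun f ⇑u) :=
      Stmt7Aux.Sfun_congr _ _ (Stmt7Aux.RL_apply hf u)
    filter_upwards [hK₂ u, Stmt7Aux.factor2_ae hf u,
      Stmt7Aux.SL_apply hf (Stmt7Aux.RL hf u)] with x e1 e2 e3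
    rw [e1, e2, e3, h2]
  intro l hl m hm
  refine le_antisymm ?_ ?_
  · exact Stmt7Aux.rank_ker_le K₁ K₂ (Stmt7Aux.SL hf) (Stmt7Aux.RL hf) hA hB l hl m
  · exact Stmt7Aux.rank_ker_le K₂ K₁ (Stmt7Aux.RL hf) (Stmt7Aux.SL hf) hB hA l hl m
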